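/- Let W ≥ 2 be an integer and let G be a connected finite simple graph on n vertices with edge weights w : E → {1, 2, …, W}. For each ℓ with 1 ≤ ℓ ≤ W, let G^{(ℓ)} denote the spanning subgraph of G consisting of all edges of weight at most ℓ, and let cc^{(ℓ)} denote the number of connected components of G^{(ℓ)}. Then the weight of a minimum spanning tree of G satisfies c(MST) = n − W + Σ_{ℓ=1}^{W−1} cc^{(ℓ)}. -/

import Mathlib

open Finset

namespace MSTAux

open SimpleGraph

variable {V : Type*}

lemma acyclic_anti {H K : SimpleGraph V} (h : H ≤ K) (hK : K.IsAcyclic) : H.IsAcyclic :=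
  fun _ c hc => hK (c.mapLe h) (hc.mapLe h)

lemma reach_lift {H K : SimpleGraph V}
    (h : ∀ a b, H.Adj a b → K.Reachable a b) {u v : V} (hr : H.Reachable u v) :
    K.Reachable u v := by
  obtain ⟨p⟩ := hr
  induction p with
  | nil => exact Reachable.refl _
  | cons ha _ ih => exact (h _ _ ha).trans ih

lemma reachable_sup_edge {H : SimpleGraph V} {a b u v : V}
    (h : (H ⊔ edge a b).Reachable u v) :
    H.Reachable u v ∨ (H.Reachable u a ∧ H.Reachable b v) ∨
      (H.Reachable u b ∧ H.Reachable a v) := by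
  obtain ⟨p⟩ := h
  induction p with
  | nil => exact Or.inl (Reachable.refl _)
  | @cons x y z hxy p ih =>
    rcases (sup_adj _ _ _ _).mp hxy with hH | he
    · rcases ih with h1 | ⟨h2, h3⟩ | ⟨h2, h3⟩
      · exact Or.inl (hH.reachable.trans h1)
      · exact Or.inr (Or.inl ⟨hH.reachable.trans h2, h3⟩)
      · exact Or.inr (Or.inr ⟨hH.reachable.trans h2, h3⟩)
    · rw [edge_adj] at he
      obtain ⟨⟨rfl, rfl⟩ | ⟨rfl, rfl⟩, hne⟩ := he
      · rcases ih with h1 | ⟨h2, h3⟩ | ⟨h2, h3⟩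
        · exact Or.inr (Or.inl ⟨Reachable.refl _, h1⟩)
        · exact Or.inl (h2.symm.trans h3)
        · exact Or.inl h3
      · rcases ih with h1 | ⟨h2, h3⟩ | ⟨h2, h3⟩
        · exact Or.inr (Or.inr ⟨Reachable.refl _, h1⟩)
        · exact Or.inl h3
        · exact Or.inl (h2.symm.trans h3)

lemma sdiff_edge_eq {H : SimpleGraph V} {a b : V} (hab : ¬ H.Adj a b) :
    (H ⊔ edge a b) \ fromEdgeSet {s(a, b)} = H := by
  ext u v
  rw [sdiff_adj, sup_adj, fromEdgeSet_adj, edge_adj]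
  constructor
  · rintro ⟨hH | ⟨h1, h2⟩, h3⟩
    · exact hH
    · exact absurd ⟨by rcases h1 with ⟨rfl, rfl⟩ | ⟨rfl, rfl⟩ <;> simp [Sym2.eq_swap], h2⟩ h3
  · intro hH
    refine ⟨Or.inl hH, ?_⟩
    rintro ⟨he, -⟩
    rw [Set.mem_singleton_iff, Sym2.eq_iff] at he
    rcases he with ⟨rfl, rfl⟩ | ⟨rfl, rfl⟩
    · exact hab hH
    · exact hab hH.symm

lemma isAcyclic_sup_edge {H : SimpleGraph V} {a b : V} (hac : H.IsAcyclic)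
    (hreach : ¬ H.Reachable a b) : (H ⊔ edge a b).IsAcyclic := by
  have hab : ¬ H.Adj a b := fun h => hreach h.reachable
  intro x c hc
  by_cases he : s(a, b) ∈ c.edges
  · have := adj_and_reachable_delete_edges_iff_exists_cycle.mpr ⟨x, c, hc, he⟩
    rw [deleteEdges, sdiff_edge_eq hab] at this
    exact hreach this.2
  · have hsub : ∀ e ∈ c.edges, e ∈ H.edgeSet := by
      intro e hecs
      have hm : e ∈ (H ⊔ edge a b).edgeSet := c.edges_subset_edgeSet hecs
      rw [edgeSet_sup] at hm
      rcases hm with h | h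
      · exact h
      · exfalso
        rw [edge, edgeSet_fromEdgeSet] at h
        obtain ⟨h1, -⟩ := h
        rw [Set.mem_singleton_iff] at h1
        exact he (h1 ▸ hecs)
    exact hac (c.transfer H hsub) (hc.transfer hsub)

lemma comp_map_surjective {H K : SimpleGraph V} (hle : H ≤ K) :
    Function.Surjective (ConnectedComponent.map (Hom.ofLE hle)) := by
  intro c
  refine c.ind fun x => ⟨H.connectedComponentMk x, ?_⟩
  rfl

lemma ncomp_le {H K : SimpleGraph V} [Finite V] (hle : H ≤ K) :
    Nat.card K.ConnectedComponent ≤ Nat.card H.ConnectedComponent :=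
  Nat.card_le_card_of_surjective _ (comp_map_surjective hle)

lemma ncomp_eq {H K : SimpleGraph V} [Finite V] (hle : H ≤ K)
    (hrev : ∀ u v, K.Reachable u v → H.Reachable u v) :
    Nat.card H.ConnectedComponent = Nat.card K.ConnectedComponent := by
  refine Nat.card_eq_of_bijective (ConnectedComponent.map (Hom.ofLE hle))
    ⟨?_, comp_map_surjective hle⟩
  intro c d
  refine ConnectedComponent.ind₂ (fun u v h => ?_) c d
  rw [ConnectedComponent.eq]
  have h' : K.connectedComponentMk u = K.connectedComponentMk v := h
  rw [ConnectedComponent.eq] at h'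
  exact hrev _ _ h'

lemma ncomp_connected {H : SimpleGraph V} (h : H.Connected) :
    Nat.card H.ConnectedComponent = 1 := by
  rw [Nat.card_eq_one_iff_unique]
  constructor
  · constructor
    intro c d
    refine ConnectedComponent.ind₂ (fun u v => ?_) c d
    rw [ConnectedComponent.eq]
    exact h.preconnected u v
  · have : Nonempty V := h.nonempty
    exact ⟨H.connectedComponentMk Classical.ofNonempty⟩

lemma ncomp_bot [Fintype V] :
    Nat.card (⊥ : SimpleGraph V).ConnectedComponent = Fintype.card V := by
  rw [← Nat.card_eq_fintype_card]
  refine (Nat.card_eq_of_bijective (fun v => (⊥ : SimpleGraph V).connectedComponentMk v)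
    ⟨?_, ?_⟩).symm
  · intro u v h
    rw [ConnectedComponent.eq, reachable_bot] at h
    exact h
  · intro c
    exact c.ind fun x => ⟨x, rfl⟩

lemma ncomp_sup_edge [Finite V] {H : SimpleGraph V} {a b : V} (h : ¬ H.Reachable a b) :
    Nat.card H.ConnectedComponent = Nat.card (H ⊔ edge a b).ConnectedComponent + 1 := by
  classical
  have hab : a ≠ b := fun e => h (e ▸ Reachable.refl a)
  set cb := H.connectedComponentMk b with hcb
  have h1 : Nat.card H.ConnectedComponent =
      Nat.card {c : H.ConnectedComponent // ¬ c = cb} + 1 := by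
    have e1 := Nat.card_congr (Equiv.sumCompl (fun c : H.ConnectedComponent => c = cb))
    rw [Nat.card_sum] at e1
    have h2 : Nat.card {c : H.ConnectedComponent // c = cb} = 1 := by
      rw [Nat.card_eq_one_iff_unique]
      exact ⟨⟨fun x y => Subtype.ext (x.2.trans y.2.symm)⟩, ⟨⟨cb, rfl⟩⟩⟩
    omega
  rw [h1]
  congr 1
  refine Nat.card_eq_of_bijective
    (fun c => ConnectedComponent.map (Hom.ofLE le_sup_left) c.1) ⟨?_, ?_⟩
  · rintro ⟨c, hc⟩ ⟨d, hd⟩ hcd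
    have key : ∀ c d : H.ConnectedComponent, ¬ c = cb → ¬ d = cb →
        ConnectedComponent.map (Hom.ofLE (le_sup_left :
          H ≤ H ⊔ edge a b)) c =
        ConnectedComponent.map (Hom.ofLE le_sup_left) d → c = d := by
      intro c d
      refine ConnectedComponent.ind₂ (fun u v hu hv huv => ?_) c d
      have h' : (H ⊔ edge a b).connectedComponentMk u =
          (H ⊔ edge a b).connectedComponentMk v := huv
      rw [ConnectedComponent.eq] at h'
      rw [ConnectedComponent.eq]
      rcases reachable_sup_edge h' with h1 | ⟨h2, h3⟩ | ⟨h2, h3⟩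
      · exact h1
      · exact absurd (ConnectedComponent.eq.mpr h3.symm) hv
      · exact absurd (ConnectedComponent.eq.mpr h2) hu
    exact Subtype.ext (key c d hc hd hcd)
  · intro c
    refine c.ind fun x => ?_
    by_cases hx : H.Reachable x a ∨ H.Reachable x b
    · refine ⟨⟨H.connectedComponentMk a, fun hc => h (ConnectedComponent.exact hc)⟩, ?_⟩
      show (H ⊔ edge a b).connectedComponentMk a = (H ⊔ edge a b).connectedComponentMk x
      rw [ConnectedComponent.eq]
      have hadj : (H ⊔ edge a b).Adj a b := by
        rw [sup_adj, edge_adj]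
        exact Or.inr ⟨Or.inl ⟨rfl, rfl⟩, hab⟩
      rcases hx with hxa | hxb
      · exact (hxa.mono le_sup_left).symm
      · exact hadj.reachable.trans (hxb.mono le_sup_left).symm
    · push_neg at hx
      refine ⟨⟨H.connectedComponentMk x, fun hc => hx.2 (ConnectedComponent.exact hc)⟩, rfl⟩

lemma fromEdgeSet_insert [DecidableEq V] (F : Finset (Sym2 V)) (a b : V) :
    fromEdgeSet (↑(insert s(a, b) F) : Set (Sym2 V)) = fromEdgeSet (↑F) ⊔ edge a b := by
  rw [Finset.coe_insert, Set.insert_eq, fromEdgeSet_union, sup_comm]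
  rfl

lemma forest_card [Fintype V] [DecidableEq V] (F : Finset (Sym2 V))
    (hnd : ∀ e ∈ F, ¬ e.IsDiag)
    (hac : (fromEdgeSet (↑F : Set (Sym2 V))).IsAcyclic) :
    Nat.card (fromEdgeSet (↑F : Set (Sym2 V))).ConnectedComponent + F.card
      = Fintype.card V := by
  induction F using Finset.induction_on with
  | empty => simpa [Finset.coe_empty, fromEdgeSet_empty] using ncomp_bot (V := V)
  | @insert e F he ih =>
    induction e using Sym2.ind with
    | _ a b =>
      have hab : a ≠ b := by
        have := hnd s(a, b) (Finset.mem_insert_self _ _)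
        simpa [Sym2.isDiag_iff_proj_eq] using this
      rw [fromEdgeSet_insert] at hac ⊢
      have hacF : (fromEdgeSet (↑F : Set (Sym2 V))).IsAcyclic :=
        acyclic_anti le_sup_left hac
      have hnadj : ¬ (fromEdgeSet (↑F : Set (Sym2 V))).Adj a b := by
        rw [fromEdgeSet_adj]
        rintro ⟨hm, -⟩
        exact he (by simpa using hm)
      have hadj : (fromEdgeSet (↑F : Set (Sym2 V)) ⊔ edge a b).Adj a b := by
        rw [sup_adj, edge_adj]
        exact Or.inr ⟨Or.inl ⟨rfl, rfl⟩, hab⟩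
      have hbridge := (isAcyclic_iff_forall_adj_isBridge.mp hac) hadj
      rw [isBridge_iff] at hbridge
      have hreach : ¬ (fromEdgeSet (↑F : Set (Sym2 V))).Reachable a b := by
        intro hr
        apply hbridge
        rw [deleteEdges, sdiff_edge_eq hnadj]
        exact hr
      have ih' := ih (fun e heF => hnd e (Finset.mem_insert_of_mem heF)) hacF
      rw [ncomp_sup_edge hreach] at ih'
      rw [Finset.card_insert_of_notMem he]
      omega

lemma tree_weight [Fintype V] [DecidableEq V] (G : SimpleGraph V) [DecidableRel G.Adj]
    (W : ℕ) (hW : 1 ≤ W) (w : Sym2 V → ℕ)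
    (hw : ∀ e ∈ G.edgeSet, 1 ≤ w e ∧ w e ≤ W)
    (F : Finset (Sym2 V)) (hFG : F ⊆ G.edgeFinset)
    (hconn : (fromEdgeSet (↑F : Set (Sym2 V))).Connected)
    (hac : (fromEdgeSet (↑F : Set (Sym2 V))).IsAcyclic) :
    (∑ e ∈ F, w e : ℤ) = (Fintype.card V : ℤ) - W + ∑ ℓ ∈ Finset.Icc 1 (W - 1),
      (Nat.card (fromEdgeSet (↑(F.filter (fun e => w e ≤ ℓ)) :
        Set (Sym2 V))).ConnectedComponent : ℤ) := by
  classical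
  set n := Fintype.card V with hn
  have hnd : ∀ e ∈ F, ¬ e.IsDiag := fun e he =>
    G.not_isDiag_of_mem_edgeSet (mem_edgeFinset.mp (hFG he))
  have hFcard : 1 + F.card = n := by
    have := forest_card F hnd hac
    rwa [ncomp_connected hconn] at this
  have hlev : ∀ ℓ : ℕ, Nat.card (fromEdgeSet (↑(F.filter (fun e => w e ≤ ℓ)) :
      Set (Sym2 V))).ConnectedComponent + (F.filter (fun e => w e ≤ ℓ)).card = n := by
    intro ℓ
    refine forest_card _ (fun e he => hnd e (Finset.mem_of_mem_filter _ he)) ?_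
    exact acyclic_anti (fromEdgeSet_mono (by exact_mod_cast Finset.filter_subset _ _)) hac
  have key : ∀ e ∈ F, (w e : ℤ) = 1 + ∑ ℓ ∈ Finset.Icc 1 (W - 1),
      (if ℓ < w e then (1 : ℤ) else 0) := by
    intro e he
    obtain ⟨h1, h2⟩ := hw e (mem_edgeFinset.mp (hFG he))
    rw [Finset.sum_boole]
    have hfilt : (Finset.Icc 1 (W - 1)).filter (fun ℓ => ℓ < w e)
        = Finset.Icc 1 (w e - 1) := by
      ext ℓ
      simp only [Finset.mem_filter, Finset.mem_Icc]
      omega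
    rw [hfilt, Nat.card_Icc]
    push_cast
    omega
  calc (∑ e ∈ F, (w e : ℤ))
      = ∑ e ∈ F, (1 + ∑ ℓ ∈ Finset.Icc 1 (W - 1), (if ℓ < w e then (1 : ℤ) else 0)) :=
        Finset.sum_congr rfl key
    _ = F.card + ∑ ℓ ∈ Finset.Icc 1 (W - 1), ∑ e ∈ F, (if ℓ < w e then (1 : ℤ) else 0) := by
        rw [Finset.sum_add_distrib, Finset.sum_const, Finset.sum_comm]
        simp
    _ = F.card + ∑ ℓ ∈ Finset.Icc 1 (W - 1),
          ((Nat.card (fromEdgeSet (↑(F.filter (fun e => w e ≤ ℓ)) :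
            Set (Sym2 V))).ConnectedComponent : ℤ) - 1) := by
        congr 1
        refine Finset.sum_congr rfl fun ℓ _ => ?_
        rw [Finset.sum_boole]
        have hsplit := Finset.card_filter_add_card_filter_not
          (s := F) (p := fun e => w e ≤ ℓ)
        have hcongr : F.filter (fun e => ¬ w e ≤ ℓ) = F.filter (fun e => ℓ < w e) := by
          apply Finset.filter_congr
          intro e _
          simp [not_le]
        rw [hcongr] at hsplit
        have := hlev ℓ
        omega
    _ = (n : ℤ) - W + ∑ ℓ ∈ Finset.Icc 1 (W - 1),
          (Nat.card (fromEdgeSet (↑(F.filter (fun e => w e ≤ ℓ)) :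
            Set (Sym2 V))).ConnectedComponent : ℤ) := by
        rw [Finset.sum_sub_distrib, Finset.sum_const, Nat.card_Icc]
        have h1 : ((W - 1 + 1 - 1 : ℕ) : ℤ) = (W : ℤ) - 1 := by omega
        rw [nsmul_eq_mul, h1]
        have h2 : ((F.card : ℤ)) = (n : ℤ) - 1 := by omega
        rw [h2]
        ring

lemma exists_maximal_forest [Fintype V] [DecidableEq V] (E' F : Finset (Sym2 V))
    (hFE : F ⊆ E') (hac : (fromEdgeSet (↑F : Set (Sym2 V))).IsAcyclic) :
    ∃ F', F ⊆ F' ∧ F' ⊆ E' ∧ (fromEdgeSet (↑F' : Set (Sym2 V))).IsAcyclic ∧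
      ∀ e ∈ E', (fromEdgeSet (↑(insert e F') : Set (Sym2 V))).IsAcyclic → e ∈ F' := by
  classical
  set S := E'.powerset.filter
    (fun F' => F ⊆ F' ∧ (fromEdgeSet (↑F' : Set (Sym2 V))).IsAcyclic) with hS
  have hFS : F ∈ S := by
    simp only [hS, Finset.mem_filter, Finset.mem_powerset]
    exact ⟨hFE, Finset.Subset.refl F, hac⟩
  obtain ⟨F', hF'S, hmax⟩ := S.exists_max_image Finset.card ⟨F, hFS⟩
  simp only [hS, Finset.mem_filter, Finset.mem_powerset] at hF'S
  refine ⟨F', hF'S.2.1, hF'S.1, hF'S.2.2, ?_⟩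
  intro e heE' hacins
  by_contra hne
  have hmem : insert e F' ∈ S := by
    simp only [hS, Finset.mem_filter, Finset.mem_powerset]
    exact ⟨Finset.insert_subset heE' hF'S.1,
      hF'S.2.1.trans (Finset.subset_insert _ _), hacins⟩
  have := hmax _ hmem
  rw [Finset.card_insert_of_notMem hne] at this
  omega

lemma kruskal_chain [Fintype V] [DecidableEq V] (G : SimpleGraph V) [DecidableRel G.Adj]
    (w : Sym2 V → ℕ) (hw1 : ∀ e ∈ G.edgeSet, 1 ≤ w e) :
    ∀ k : ℕ, ∃ F : Finset (Sym2 V),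
      F ⊆ G.edgeFinset.filter (fun e => w e ≤ k) ∧
      (fromEdgeSet (↑F : Set (Sym2 V))).IsAcyclic ∧
      ∀ ℓ ≤ k, ∀ e ∈ G.edgeFinset.filter (fun e' => w e' ≤ ℓ),
        (fromEdgeSet (↑(insert e (F.filter (fun e' => w e' ≤ ℓ))) :
          Set (Sym2 V))).IsAcyclic → e ∈ F.filter (fun e' => w e' ≤ ℓ) := by
  intro k
  induction k with
  | zero =>
    refine ⟨∅, by simp, by simp [Finset.coe_empty, fromEdgeSet_empty], ?_⟩
    intro ℓ hℓ e he _
    exfalso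
    rw [Finset.mem_filter, mem_edgeFinset] at he
    have := hw1 e he.1
    omega
  | succ k ih =>
    obtain ⟨F, hFsub, hFac, hFmax⟩ := ih
    have hFE : F ⊆ G.edgeFinset.filter (fun e => w e ≤ k + 1) :=
      hFsub.trans (Finset.monotone_filter_right _ (fun e _ h => h.trans (Nat.le_succ k)))
    obtain ⟨F', hFF', hF'E, hF'ac, hF'max⟩ := exists_maximal_forest _ F hFE hFac
    have hfilt_eq : ∀ ℓ ≤ k, F'.filter (fun e => w e ≤ ℓ) = F.filter (fun e => w e ≤ ℓ) := by
      intro ℓ hℓ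
      apply Finset.Subset.antisymm
      · intro e he
        rw [Finset.mem_filter] at he
        obtain ⟨heF', hwe⟩ := he
        have heE : e ∈ G.edgeFinset.filter (fun e' => w e' ≤ ℓ) := by
          rw [Finset.mem_filter]
          exact ⟨Finset.mem_of_mem_filter _ (hF'E heF'), hwe⟩
        apply hFmax ℓ hℓ e heE
        refine acyclic_anti (fromEdgeSet_mono ?_) hF'ac
        rw [Finset.coe_subset]
        apply Finset.insert_subset heF'
        exact (Finset.filter_subset _ _).trans hFF'
      · intro e he
        rw [Finset.mem_filter] at he ⊢
        exact ⟨hFF' he.1, he.2⟩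
    refine ⟨F', hF'E, hF'ac, ?_⟩
    intro ℓ hℓ e he hins
    rcases Nat.lt_succ_iff_lt_or_eq.mp (Nat.lt_succ_of_le hℓ) with hc | hc
    · have hℓk : ℓ ≤ k := Nat.lt_succ_iff.mp hc
      rw [hfilt_eq ℓ hℓk] at hins ⊢
      exact hFmax ℓ hℓk e he hins
    · subst hc
      have htrue : F'.filter (fun e' => w e' ≤ k + 1) = F' :=
        Finset.filter_true_of_mem (fun x hx => (Finset.mem_filter.mp (hF'E hx)).2)
      rw [htrue] at hins ⊢
      exact hF'max e he hins

end MSTAux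


open SimpleGraph

/-- For a connected graph `G` on `n` vertices with integer edge weights in `{1,…,W}`,
letting `cc^{(ℓ)}` denote the number of connected components of the subgraph `G^{(ℓ)}`
of edges of weight at most `ℓ`, the minimum spanning tree weight satisfies
`c(MST) = n - W + ∑_{ℓ=1}^{W-1} cc^{(ℓ)}`. A spanning tree is represented by its set
`F` of edges: `F ⊆ E(G)` and the graph with edge set `F` is connected and acyclic. -/
theorem mst_weight_eq_card_sub_add_components {V : Type*} [Fintype V] [DecidableEq V]
    (G : SimpleGraph V) [DecidableRel G.Adj] (hG : G.Connected)
    (W : ℕ) (hW : 2 ≤ W) (w : Sym2 V → ℕ)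
    (hw : ∀ e ∈ G.edgeSet, 1 ≤ w e ∧ w e ≤ W)
    (cMST : ℕ)
    (hmin : IsLeast {x : ℕ | ∃ F : Finset (Sym2 V), F ⊆ G.edgeFinset ∧
        (SimpleGraph.fromEdgeSet (↑F : Set (Sym2 V))).Connected ∧
        (SimpleGraph.fromEdgeSet (↑F : Set (Sym2 V))).IsAcyclic ∧
        x = ∑ e ∈ F, w e} cMST) :
    (cMST : ℤ) = (Fintype.card V : ℤ) - W + ∑ ℓ ∈ Finset.Icc 1 (W - 1),
      (Nat.card (G.deleteEdges {e | ℓ < w e}).ConnectedComponent : ℤ) := by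
  classical
  have hne : Nonempty V := hG.nonempty
  have hW1 : 1 ≤ W := le_trans (by norm_num) hW
  -- Kruskal forest
  obtain ⟨Fs, hFsub, hFac, hFmax⟩ := MSTAux.kruskal_chain G w (fun e he => (hw e he).1) W
  have hFsubG : Fs ⊆ G.edgeFinset := hFsub.trans (Finset.filter_subset _ _)
  have hEW : G.edgeFinset.filter (fun e => w e ≤ W) = G.edgeFinset :=
    Finset.filter_true_of_mem (fun e he => (hw e (mem_edgeFinset.mp he)).2)
  have hFsW : Fs.filter (fun e => w e ≤ W) = Fs :=
    Finset.filter_true_of_mem (fun e he => (hw e (mem_edgeFinset.mp (hFsubG he))).2)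
  have hadjreach : ∀ a b, G.Adj a b → (fromEdgeSet (↑Fs : Set (Sym2 V))).Reachable a b := by
    intro a b hab
    have heE : s(a, b) ∈ G.edgeFinset.filter (fun e' => w e' ≤ W) := by
      rw [hEW, mem_edgeFinset]
      exact hab
    by_cases hmem : s(a, b) ∈ Fs
    · exact ((fromEdgeSet_adj _).mpr ⟨by exact_mod_cast hmem, hab.ne⟩).reachable
    · by_contra hreach
      have hins : (fromEdgeSet (↑(insert s(a, b) (Fs.filter (fun e' => w e' ≤ W))) :
          Set (Sym2 V))).IsAcyclic := by
        rw [hFsW, MSTAux.fromEdgeSet_insert]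
        exact MSTAux.isAcyclic_sup_edge hFac hreach
      have := hFmax W le_rfl _ heE hins
      rw [hFsW] at this
      exact hmem this
  have hFconn : (fromEdgeSet (↑Fs : Set (Sym2 V))).Connected := by
    rw [connected_iff]
    exact ⟨fun u v => MSTAux.reach_lift hadjreach (hG.preconnected u v), hne⟩
  -- per-level component equality for the Kruskal forest
  have hlevel : ∀ ℓ ∈ Finset.Icc 1 (W - 1),
      (Nat.card (fromEdgeSet (↑(Fs.filter (fun e => w e ≤ ℓ)) :
        Set (Sym2 V))).ConnectedComponent : ℤ)
        = (Nat.card (G.deleteEdges {e | ℓ < w e}).ConnectedComponent : ℤ) := by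
    intro ℓ hℓ
    have hℓW : ℓ ≤ W := le_trans (Finset.mem_Icc.mp hℓ).2 (Nat.sub_le W 1)
    have hle : fromEdgeSet (↑(Fs.filter (fun e => w e ≤ ℓ)) : Set (Sym2 V))
        ≤ G.deleteEdges {e | ℓ < w e} := by
      intro u v huv
      rw [fromEdgeSet_adj] at huv
      obtain ⟨hm, hne'⟩ := huv
      rw [Finset.mem_coe, Finset.mem_filter] at hm
      rw [deleteEdges_adj]
      refine ⟨mem_edgeFinset.mp (hFsubG hm.1), ?_⟩
      simp only [Set.mem_setOf_eq, not_lt]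
      exact hm.2
    have := MSTAux.ncomp_eq hle ?_
    · exact_mod_cast this
    refine fun u v h => MSTAux.reach_lift ?_ h
    intro a b hab
    rw [deleteEdges_adj] at hab
    obtain ⟨habG, hnlt⟩ := hab
    have hwle : w s(a, b) ≤ ℓ := not_lt.mp (by simpa using hnlt)
    have heE : s(a, b) ∈ G.edgeFinset.filter (fun e' => w e' ≤ ℓ) := by
      rw [Finset.mem_filter, mem_edgeFinset]
      exact ⟨habG, hwle⟩
    by_cases hmem : s(a, b) ∈ Fs.filter (fun e' => w e' ≤ ℓ)
    · exact ((fromEdgeSet_adj _).mpr ⟨by exact_mod_cast hmem, habG.ne⟩).reachable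
    · by_contra hreach
      have hins : (fromEdgeSet (↑(insert s(a, b) (Fs.filter (fun e' => w e' ≤ ℓ))) :
          Set (Sym2 V))).IsAcyclic := by
        rw [MSTAux.fromEdgeSet_insert]
        refine MSTAux.isAcyclic_sup_edge ?_ hreach
        exact MSTAux.acyclic_anti
          (fromEdgeSet_mono (by exact_mod_cast Finset.filter_subset _ _)) hFac
      exact hmem (hFmax ℓ hℓW _ heE hins)
  -- upper bound
  have hub : (cMST : ℤ) ≤ (Fintype.card V : ℤ) - W + ∑ ℓ ∈ Finset.Icc 1 (W - 1),
      (Nat.card (G.deleteEdges {e | ℓ < w e}).ConnectedComponent : ℤ) := by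
    have h1 : cMST ≤ ∑ e ∈ Fs, w e := hmin.2 ⟨Fs, hFsubG, hFconn, hFac, rfl⟩
    have h2 := MSTAux.tree_weight G W hW1 w hw Fs hFsubG hFconn hFac
    rw [Finset.sum_congr rfl hlevel] at h2
    calc (cMST : ℤ) ≤ ((∑ e ∈ Fs, w e : ℕ) : ℤ) := by exact_mod_cast h1
      _ = _ := by push_cast at h2 ⊢; exact h2
  -- lower bound
  obtain ⟨F0, hF0sub, hF0conn, hF0ac, hF0sum⟩ := hmin.1
  have hlb : (Fintype.card V : ℤ) - W + ∑ ℓ ∈ Finset.Icc 1 (W - 1),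
      (Nat.card (G.deleteEdges {e | ℓ < w e}).ConnectedComponent : ℤ) ≤ (cMST : ℤ) := by
    have h2 := MSTAux.tree_weight G W hW1 w hw F0 hF0sub hF0conn hF0ac
    have h3 : (cMST : ℤ) = ∑ e ∈ F0, (w e : ℤ) := by
      rw [hF0sum]; push_cast; rfl
    rw [h3, h2]
    apply add_le_add_right
    apply Finset.sum_le_sum
    intro ℓ hℓ
    have hle : fromEdgeSet (↑(F0.filter (fun e => w e ≤ ℓ)) : Set (Sym2 V))
        ≤ G.deleteEdges {e | ℓ < w e} := by
      intro u v huv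
      rw [fromEdgeSet_adj] at huv
      obtain ⟨hm, hne'⟩ := huv
      rw [Finset.mem_coe, Finset.mem_filter] at hm
      rw [deleteEdges_adj]
      refine ⟨mem_edgeFinset.mp (hF0sub hm.1), ?_⟩
      simp only [Set.mem_setOf_eq, not_lt]
      exact hm.2
    exact_mod_cast MSTAux.ncomp_le hle
  exact le_antisymm hub hlb
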